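/- arXiv:2308.10094 — 2 statements merged into one kernel-verified Lean document; each statement's English description precedes it below -/
import Mathlib

section
/- For finite sets Y, X, an action set A, and a loss function L : Y × A → ℝ, define the L-conditional entropy H_L(Y|X) = Σ_x P_X(x) · min_{a ∈ A} E[L(Y,a) | X = x]. Then for any function f : X → Z (so Z = f(X) is a deterministic processing of X), H_L(Y | X) ≤ H_L(Y | f(X)). That is, L-conditional entropy satisfies a data processing inequality: conditioning on more information cannot increase the generalized entropy. -/
/-- Data processing inequality for the `L`-conditional entropy
`H_L(Y|X) = Σ_x min_{a∈A} Σ_y P(y,x) L(y,a)` (here written with the joint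
distribution, which equals `Σ_x P_X(x) min_a E[L(Y,a)|X=x]`): conditioning on a
deterministic function `f(X)` of `X` cannot decrease the entropy. -/
theorem L_conditional_entropy_data_processing
    {Y X Z A : Type} [Fintype Y] [Fintype X] [Fintype Z] [Fintype A]
    [Nonempty A] [DecidableEq Z]
    (p : Y → X → ℝ) (hp : ∀ y x, 0 ≤ p y x)
    (hsum : ∑ x, ∑ y, p y x = 1)
    (L : Y → A → ℝ) (f : X → Z) :
    ∑ x, Finset.univ.inf' Finset.univ_nonempty
        (fun a => ∑ y, p y x * L y a)
      ≤ ∑ z, Finset.univ.inf' Finset.univ_nonempty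
        (fun a => ∑ x ∈ Finset.univ.filter (fun x => f x = z), ∑ y, p y x * L y a) := by
  rw [← Finset.sum_fiberwise (g := f)
    (f := fun x => Finset.univ.inf' Finset.univ_nonempty (fun a => ∑ y, p y x * L y a))]
  apply Finset.sum_le_sum
  intro z _
  apply Finset.le_inf'
  intro a _
  apply Finset.sum_le_sum
  intro x _
  exact Finset.inf'_le _ (Finset.mem_univ a)
end

section
/- Consider the restart-in-state verification identity: let err : ℕ → ℝ be bounded, p ∈ ℝ, b ∈ ℕ, and suppose h : ℕ → ℝ satisfies h(δ) = min_{Z ∈ ℕ} [ Σ_{k=0}^{Z} (err(δ + k) − p) ] + h(b + 1) for all δ ≥ 1 (the restart Bellman equation with unit transmission time). Then the transmit condition h(δ + 1) ≥ h(b + 1) is equivalent to min_{Z ∈ ℕ} Σ_{k=0}^{Z} (err(δ + 1 + k) − p) ≥ 0, which in turn (dividing by Z+1 and taking infima) is equivalent to inf_{τ ≥ 1} (1/τ) Σ_{j=0}^{τ−1} err(δ + j + 1) ≥ p. -/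
/-- Restart-in-state verification identity: if `h` satisfies the restart
Bellman equation `h(δ) = inf_{Z∈ℕ} Σ_{k=0}^{Z} (err(δ+k) − p) + h(b+1)` for all
`δ ≥ 1` (unit transmission time), then the transmit condition
`h(δ+1) ≥ h(b+1)` is equivalent to `inf_Z Σ_{k=0}^{Z} (err(δ+1+k) − p) ≥ 0`,
which is equivalent to `inf_{τ≥1} (1/τ) Σ_{j<τ} err(δ+j+1) ≥ p`. -/
theorem restart_in_state_threshold
    (err : ℕ → ℝ) (C : ℝ) (hC : ∀ n, |err n| ≤ C) (p : ℝ) (b : ℕ) (h : ℕ → ℝ)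
    (hBellman : ∀ δ : ℕ, 1 ≤ δ →
      h δ = (⨅ Z : ℕ, ∑ k ∈ Finset.range (Z + 1), (err (δ + k) - p)) + h (b + 1))
    (δ : ℕ)
    (hbb : BddBelow (Set.range fun Z : ℕ =>
      ∑ k ∈ Finset.range (Z + 1), (err (δ + 1 + k) - p))) :
    (h (b + 1) ≤ h (δ + 1) ↔
      0 ≤ ⨅ Z : ℕ, ∑ k ∈ Finset.range (Z + 1), (err (δ + 1 + k) - p)) ∧
    ((0 ≤ ⨅ Z : ℕ, ∑ k ∈ Finset.range (Z + 1), (err (δ + 1 + k) - p)) ↔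
      p ≤ ⨅ τ : {τ : ℕ // 1 ≤ τ},
        (1 / (τ.1 : ℝ)) * ∑ j ∈ Finset.range τ.1, err (δ + j + 1)) := by
  have key : ∀ Z : ℕ, ∑ k ∈ Finset.range (Z + 1), (err (δ + 1 + k) - p)
      = (∑ j ∈ Finset.range (Z + 1), err (δ + j + 1)) - (Z + 1 : ℕ) * p := by
    intro Z
    rw [Finset.sum_sub_distrib, Finset.sum_const, Finset.card_range, nsmul_eq_mul]
    congr 1
    refine Finset.sum_congr rfl fun k _ => ?_
    congr 1; omega
  have bdd2 : BddBelow (Set.range fun τ : {τ : ℕ // 1 ≤ τ} =>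
      (1 / (τ.1 : ℝ)) * ∑ j ∈ Finset.range τ.1, err (δ + j + 1)) := by
    refine ⟨-C, ?_⟩
    rintro x ⟨⟨τ, hτ⟩, rfl⟩
    have hτpos : (0:ℝ) < τ := by exact_mod_cast hτ
    have hs : -( (τ:ℝ) * C) ≤ ∑ j ∈ Finset.range τ, err (δ + j + 1) := by
      have : ∑ j ∈ Finset.range τ, (-C) ≤ ∑ j ∈ Finset.range τ, err (δ + j + 1) :=
        Finset.sum_le_sum fun j _ => neg_le_of_abs_le (hC _)
      simpa using this
    simp only
    rw [div_mul_eq_mul_div, one_mul, le_div_iff₀ hτpos]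
    nlinarith
  constructor
  · rw [hBellman (δ + 1) (by omega)]
    constructor <;> intro hx <;> linarith
  · rw [le_ciInf_iff hbb, le_ciInf_iff bdd2]
    constructor
    · rintro H ⟨τ, hτ⟩
      have hτpos : (0:ℝ) < τ := by exact_mod_cast hτ
      have := H (τ - 1)
      rw [key] at this
      have hτ1 : τ - 1 + 1 = τ := by omega
      rw [hτ1] at this
      simp only
      rw [div_mul_eq_mul_div, one_mul, le_div_iff₀ hτpos]
      linarith
    · intro H Z
      have := H ⟨Z + 1, by omega⟩
      simp only at this
      have hpos : (0:ℝ) < ((Z:ℝ) + 1) := by positivity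
      rw [div_mul_eq_mul_div, one_mul, le_div_iff₀ (by exact_mod_cast hpos)] at this
      rw [key]
      push_cast at this ⊢
      linarith
end
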